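/- Let T : Multiset α be an analytic table, A : α → β an attribute, z₁ : α → κ₁ a grouping key, and p : κ₁ → κ₂ a map, so that z₂ := p ∘ z₁ is a coarser grouping key. Assume the literal functional dependency Z₂ ∪ {A} ↦ Z₁ holds in T, i.e., for all t₁, t₂ ∈ T, if p (z₁ t₁) = p (z₁ t₂) and A t₁ = A t₂ then z₁ t₁ = z₁ t₂. Then for every x : κ₂, the count of distinct A-values of the z₂-fiber equals the sum, over the distinct z₁-keys occurring in that fiber, of the counts of distinct A-values of the z₁-fibers: ((T.filter (fun t => p (z₁ t) = x)).map A).toFinset.card = ∑ y ∈ ((T.filter (fun t => p (z₁ t) = x)).map z₁).toFinset, ((T.filter (fun t => z₁ t = y)).map A).toFinset.card. (Summarizability with COUNTDISTINCT and SUM.) -/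

import Mathlib

/-- Summarizability with COUNTDISTINCT and SUM. -/
theorem countdistinct_sum_summarizable
    {α β κ₁ κ₂ : Type*} [DecidableEq β] [DecidableEq κ₁] [DecidableEq κ₂]
    (T : Multiset α) (A : α → β) (z₁ : α → κ₁) (p : κ₁ → κ₂)
    (hLFD : ∀ t₁ ∈ T, ∀ t₂ ∈ T, p (z₁ t₁) = p (z₁ t₂) → A t₁ = A t₂ → z₁ t₁ = z₁ t₂) :
    ∀ x : κ₂,
      ((T.filter (fun t => p (z₁ t) = x)).map A).toFinset.card
        = ∑ y ∈ ((T.filter (fun t => p (z₁ t) = x)).map z₁).toFinset,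
            ((T.filter (fun t => z₁ t = y)).map A).toFinset.card := by
  intro x
  set K := ((T.filter (fun t => p (z₁ t) = x)).map z₁).toFinset with hK
  set F := fun y => ((T.filter (fun t => z₁ t = y)).map A).toFinset with hF
  have hKmem : ∀ y ∈ K, p y = x := by
    intro y hy
    simp only [hK, Multiset.mem_toFinset, Multiset.mem_map, Multiset.mem_filter] at hy
    obtain ⟨t, ⟨_, ht⟩, rfl⟩ := hy
    exact ht
  have hset : ((T.filter (fun t => p (z₁ t) = x)).map A).toFinset = K.biUnion F := by
    ext b
    simp only [Finset.mem_biUnion, hK, hF, Multiset.mem_toFinset, Multiset.mem_map,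
      Multiset.mem_filter]
    constructor
    · rintro ⟨t, ⟨htT, htx⟩, rfl⟩
      exact ⟨z₁ t, ⟨t, ⟨htT, htx⟩, rfl⟩, t, ⟨htT, rfl⟩, rfl⟩
    · rintro ⟨y, ⟨s, ⟨hsT, hsx⟩, rfl⟩, t, ⟨htT, hty⟩, rfl⟩
      exact ⟨t, ⟨htT, by rw [hty]; exact hsx⟩, rfl⟩
  rw [hset]
  apply Finset.card_biUnion
  intro y₁ h₁ y₂ h₂ hne
  rw [Function.onFun, Finset.disjoint_left]
  intro b hb₁ hb₂
  simp only [hF, Multiset.mem_toFinset, Multiset.mem_map, Multiset.mem_filter] at hb₁ hb₂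
  obtain ⟨t₁, ⟨ht₁T, ht₁y⟩, hA₁⟩ := hb₁
  obtain ⟨t₂, ⟨ht₂T, ht₂y⟩, hA₂⟩ := hb₂
  apply hne
  rw [← ht₁y, ← ht₂y]
  exact hLFD t₁ ht₁T t₂ ht₂T (by rw [ht₁y, ht₂y, hKmem y₁ h₁, hKmem y₂ h₂]) (hA₁.trans hA₂.symm)
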